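/- arXiv:1608.03115 — 3 statements merged into one kernel-verified Lean document; each statement's English description precedes it below -/
import Mathlib

section
/- Suppose (P) is continuous, every constraint function g_t is continuously differentiable on a neighborhood of x̂ ∈ S, and the Mangasarian–Fromovitz constraint qualification (MFCQ) holds at x̂. Then x̂ is an isolated efficient solution of (P) if and only if there exists ν > 0 such that for every w ∈ ℝ^n with ‖w‖ ≤ ν there exist ξ = (ξ_1, …, ξ_p) with ξ_i ∈ ∂f_i(x̂) for each i and λ in the unit simplex such that ϑ(x̂, (ξ_1 − w, …, ξ_p − w), λ) = 0. -/
open Set Filter Topology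
open scoped RealInnerProductSpace Pointwise

noncomputable section

namespace MOSIP

variable {n : ℕ} {T : Type*} {p : ℕ}

/-- The decision space `ℝ^n`. -/
abbrev Eucl (n : ℕ) := EuclideanSpace ℝ (Fin n)

/-- Subdifferential of a real-valued function. -/
def subdiff (h : Eucl n → ℝ) (x : Eucl n) : Set (Eucl n) :=
  {ξ | ∀ y, h x + ⟪ξ, y - x⟫ ≤ h y}

/-- Subdifferential of an extended-real-valued function. -/
def subdiffE (h : Eucl n → EReal) (x : Eucl n) : Set (Eucl n) :=
  {ξ | ∀ y, h x + ((⟪ξ, y - x⟫ : ℝ) : EReal) ≤ h y}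

/-- Convexity of an extended-real-valued function. -/
def ConvexE (h : Eucl n → EReal) : Prop :=
  ∀ x y : Eucl n, ∀ a b : ℝ, 0 ≤ a → 0 ≤ b → a + b = 1 →
    h (a • x + b • y) ≤ (a : EReal) * h x + (b : EReal) * h y

/-- Proper (with values in `ℝ ∪ {+∞}`): never `−∞` and not identically `+∞`. -/
def ProperE (h : Eucl n → EReal) : Prop :=
  (∀ x, h x ≠ ⊥) ∧ (∃ x, h x ≠ ⊤)

/-- Feasible set `S` of the problem `(P)`. -/
def feasSet (g : T → Eucl n → EReal) : Set (Eucl n) := {x | ∀ t, g t x ≤ 0}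

/-- Active indices `T(x)`. -/
def activeIx (g : T → Eucl n → EReal) (x : Eucl n) : Set T := {t | g t x = 0}

/-- `ε`-active indices `T_ε(x)`. -/
def activeIxEps (g : T → Eucl n → EReal) (x : Eucl n) (ε : ℝ) : Set T :=
  {t | ((-ε : ℝ) : EReal) ≤ g t x}

/-- `F(xh) = ⋃ i, ∂f_i(xh)`. -/
def FSet (f : Fin p → Eucl n → ℝ) (x : Eucl n) : Set (Eucl n) := ⋃ i, subdiff (f i) x

/-- `G(xh) = ⋃_{t ∈ T(xh)} ∂g_t(xh)`. -/
def GSet (g : T → Eucl n → EReal) (x : Eucl n) : Set (Eucl n) :=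
  ⋃ t ∈ activeIx g x, subdiffE (g t) x

/-- The smallest convex cone containing `M` and `0`: all finite nonnegative combinations. -/
def coneHull (M : Set (Eucl n)) : Set (Eucl n) :=
  {x | ∃ (s : Finset (Eucl n)) (c : Eucl n → ℝ), ↑s ⊆ M ∧ (∀ v ∈ s, 0 ≤ c v) ∧
    x = ∑ v ∈ s, c v • v}

/-- Negative polar cone `M⁰`. -/
def negPolar (M : Set (Eucl n)) : Set (Eucl n) := {d | ∀ ξ ∈ M, ⟪ξ, d⟫ ≤ 0}

/-- Strictly negative polar cone `M⁻`. -/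
def strictNegPolar (M : Set (Eucl n)) : Set (Eucl n) := {d | ∀ ξ ∈ M, ⟪ξ, d⟫ < 0}

/-- Contingent (Bouligand tangent) cone of `M` at `x`. -/
def contingentCone (M : Set (Eucl n)) (x : Eucl n) : Set (Eucl n) :=
  {v | ∃ (τ : ℕ → ℝ) (w : ℕ → Eucl n), (∀ r, 0 < τ r) ∧ Tendsto τ atTop (𝓝 0) ∧
    Tendsto w atTop (𝓝 v) ∧ ∀ r, x + τ r • w r ∈ M}

/-- Normal cone `N(M, x) := C(M, x)⁰`. -/
def normalCone (M : Set (Eucl n)) (x : Eucl n) : Set (Eucl n) :=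
  negPolar (contingentCone M x)

/-- Weak efficient solution. -/
def WeakEff (f : Fin p → Eucl n → ℝ) (S : Set (Eucl n)) (xh : Eucl n) : Prop :=
  ¬ ∃ x ∈ S, ∀ i, f i x < f i xh

/-- Efficient solution. -/
def Eff (f : Fin p → Eucl n → ℝ) (S : Set (Eucl n)) (xh : Eucl n) : Prop :=
  ¬ ∃ x ∈ S, (∀ i, f i x ≤ f i xh) ∧ ∃ j, f j x < f j xh

/-- Isolated efficient solution with constant `ν`:
`max_i (f_i(x) − f_i(xh)) ≥ ν‖x − xh‖` on `S`. -/
def IsolatedEff (f : Fin p → Eucl n → ℝ) (S : Set (Eucl n)) (xh : Eucl n) (ν : ℝ) : Prop :=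
  ∀ x ∈ S, ∃ i, ν * ‖x - xh‖ ≤ f i x - f i xh

/-- `w ∈ Σ α_i ∂f_i(xh) + Σ_{t ∈ T*} β_t ∂g_t(xh)` with multipliers as described,
where `Nonneg`/`Pos` refers to the sign condition on the `α_i`. -/
def KKTPoint (f : Fin p → Eucl n → ℝ) (g : T → Eucl n → EReal) (xh : Eucl n)
    (w : Eucl n) : Prop :=
  ∃ (α : Fin p → ℝ) (Ts : Finset T) (β : T → ℝ) (ξ : Fin p → Eucl n) (ζ : T → Eucl n),
    (∀ i, 0 ≤ α i) ∧ ∑ i, α i = 1 ∧ (∀ t ∈ Ts, t ∈ activeIx g xh) ∧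
    (∀ t ∈ Ts, 0 ≤ β t) ∧ (∀ i, ξ i ∈ subdiff (f i) xh) ∧
    (∀ t ∈ Ts, ζ t ∈ subdiffE (g t) xh) ∧
    ∑ i, α i • ξ i + ∑ t ∈ Ts, β t • ζ t = w

/-- The weak KKT condition at `xh`. -/
def WeakKKT (f : Fin p → Eucl n → ℝ) (g : T → Eucl n → EReal) (xh : Eucl n) : Prop :=
  KKTPoint f g xh 0

/-- The strong KKT condition at `xh` (all objective multipliers positive). -/
def StrongKKT (f : Fin p → Eucl n → ℝ) (g : T → Eucl n → EReal) (xh : Eucl n) : Prop :=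
  ∃ (α : Fin p → ℝ) (Ts : Finset T) (β : T → ℝ) (ξ : Fin p → Eucl n) (ζ : T → Eucl n),
    (∀ i, 0 < α i) ∧ ∑ i, α i = 1 ∧ (∀ t ∈ Ts, t ∈ activeIx g xh) ∧
    (∀ t ∈ Ts, 0 ≤ β t) ∧ (∀ i, ξ i ∈ subdiff (f i) xh) ∧
    (∀ t ∈ Ts, ζ t ∈ subdiffE (g t) xh) ∧
    ∑ i, α i • ξ i + ∑ t ∈ Ts, β t • ζ t = 0

/-- The perturbed KKT condition at `xh` with constant `ν`. -/
def PerturbedKKT (f : Fin p → Eucl n → ℝ) (g : T → Eucl n → EReal) (xh : Eucl n)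
    (ν : ℝ) : Prop :=
  ∀ w : Eucl n, ‖w‖ ≤ ν → KKTPoint f g xh w

/-- The gap function `ϑ(x, ξ, λ) = sup_{y ∈ S} Σ_i λ_i ⟪ξ_i, x − y⟫`. -/
def gapFn (S : Set (Eucl n)) (x : Eucl n) (ξ : Fin p → Eucl n) (lam : Fin p → ℝ) : EReal :=
  ⨆ y ∈ S, ((∑ i, lam i * ⟪ξ i, x - y⟫ : ℝ) : EReal)

/-- The unit simplex of multipliers. -/
def simplex (lam : Fin p → ℝ) : Prop := (∀ i, 0 ≤ lam i) ∧ ∑ i, lam i = 1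

/-- Supremum (marginal) function `ψ(x) = sup_t g_t(x)`. -/
def supFn (g : T → Eucl n → EReal) (x : Eucl n) : EReal := ⨆ t, g t x

/-- Directional derivative of a convex extended-real-valued function,
`h'(x; d) = inf_{τ > 0} (h(x + τ d) − h(x))/τ` (the limit as `τ ↓ 0`). -/
def dirDeriv (h : Eucl n → EReal) (x d : Eucl n) : EReal :=
  ⨅ τ ∈ Ioi (0 : ℝ), (h (x + τ • d) - h x) * ((τ⁻¹ : ℝ) : EReal)

/-- Every constraint is (real-valued and) continuously differentiable around `xh`,
with gradient `gr t` at `xh`. -/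
def SmoothConstraintsAt (g : T → Eucl n → EReal) (gr : T → Eucl n) (xh : Eucl n) : Prop :=
  ∀ t, ∃ (h : Eucl n → ℝ) (U : Set (Eucl n)), U ∈ 𝓝 xh ∧ (∀ y ∈ U, g t y = (h y : EReal)) ∧
    ContDiffOn ℝ 1 h U ∧ gradient h xh = gr t

/-- Slater CQ. -/
def SCQ (g : T → Eucl n → EReal) : Prop := ∃ x₀ : Eucl n, ∀ t, g t x₀ < 0

/-- Mangasarian–Fromovitz CQ at `xh`. -/
def MFCQ (g : T → Eucl n → EReal) (xh : Eucl n) : Prop :=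
  (GSet g xh).Nonempty ∧ (strictNegPolar (GSet g xh)).Nonempty

/-- Perturbed Mangasarian–Fromovitz CQ at `xh`. -/
def PMFCQ (g : T → Eucl n → EReal) (xh : Eucl n) : Prop :=
  ∃ xs : Eucl n,
    (⨅ ε ∈ Ioi (0 : ℝ), ⨆ ξ ∈ ⋃ t ∈ activeIxEps g xh ε, subdiffE (g t) xh,
      ((⟪ξ, xs⟫ : ℝ) : EReal)) < 0

/-- Local Farkas–Minkowski CQ at `xh`. -/
def LFMCQ (g : T → Eucl n → EReal) (xh : Eucl n) : Prop :=
  normalCone (feasSet g) xh = coneHull (GSet g xh)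

/-- Closed cone CQ at `xh`. -/
def CCCQ (g : T → Eucl n → EReal) (xh : Eucl n) : Prop :=
  IsClosed (coneHull (GSet g xh))

/-- Abadie CQ at `xh`. -/
def ACQ (g : T → Eucl n → EReal) (xh : Eucl n) : Prop :=
  (GSet g xh).Nonempty ∧ negPolar (GSet g xh) ⊆ contingentCone (feasSet g) xh

/-- Kuhn–Tucker CQ at `xh`. -/
def KTCQ (g : T → Eucl n → EReal) (xh : Eucl n) : Prop :=
  {d | dirDeriv (supFn g) xh d ≤ 0} ⊆ contingentCone (feasSet g) xh

/-- Pshenichnyi–Levin–Valadier CQ at `xh`. -/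
def PLVCQ (g : T → Eucl n → EReal) (xh : Eucl n) : Prop :=
  subdiffE (supFn g) xh ⊆ coneHull (GSet g xh)

/-- Weak Abadie DQ at `xh`. -/
def WADQ (f : Fin p → Eucl n → ℝ) (g : T → Eucl n → EReal) (xh : Eucl n) : Prop :=
  (GSet g xh).Nonempty ∧
    strictNegPolar (FSet f xh) ∩ negPolar (GSet g xh) ⊆ contingentCone (feasSet g) xh

/-- The sublevel sets `Q^i(xh)`. -/
def QSet (f : Fin p → Eucl n → ℝ) (S : Set (Eucl n)) (xh : Eucl n) (i : Fin p) :
    Set (Eucl n) :=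
  {x ∈ S | ∀ l, l ≠ i → f l x ≤ f l xh}

/-- Extended Abadie DQ at `xh`. -/
def EADQ (f : Fin p → Eucl n → ℝ) (g : T → Eucl n → EReal) (xh : Eucl n) : Prop :=
  (GSet g xh).Nonempty ∧
    negPolar (FSet f xh) ∩ negPolar (GSet g xh) ⊆
      ⋂ i, contingentCone (QSet f (feasSet g) xh i) xh

/-- Maeda objective qualification at `xh`. -/
def MOQ (f : Fin p → Eucl n → ℝ) (xh : Eucl n) : Prop :=
  negPolar (FSet f xh) ⊆ {0} ∪ ⋃ i, strictNegPolar (subdiff (f i) xh)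

section AuxProofs

variable {n : ℕ}

/-- Difference quotients of a convex function are monotone. -/
lemma aux_slope (f : Eucl n → ℝ) (hf : ConvexOn ℝ univ f) (x d : Eucl n) {τ τ' : ℝ}
    (h0 : 0 < τ) (h : τ ≤ τ') :
    (f (x + τ • d) - f x) / τ ≤ (f (x + τ' • d) - f x) / τ' := by
  have h0' : 0 < τ' := h0.trans_le h
  have hτ' : τ' ≠ 0 := ne_of_gt h0'
  have hb0 : 0 ≤ τ / τ' := by positivity
  have ha0 : 0 ≤ 1 - τ / τ' := by
    rw [sub_nonneg, div_le_one h0']; exact h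
  have hcomb : (1 - τ / τ') • x + (τ / τ') • (x + τ' • d) = x + τ • d := by
    rw [smul_add, smul_smul, div_mul_cancel₀ _ hτ']
    module
  have key := hf.2 (mem_univ x) (mem_univ (x + τ' • d)) ha0 hb0 (by ring)
  rw [hcomb] at key
  simp only [smul_eq_mul] at key
  rw [div_le_div_iff₀ h0 h0']
  have key2 := mul_le_mul_of_nonneg_right key h0'.le
  have expand : ((1 - τ / τ') * f x + (τ / τ') * f (x + τ' • d)) * τ'
      = (τ' - τ) * f x + τ * f (x + τ' • d) := by
    field_simp
  rw [expand] at key2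
  nlinarith [key2]

/-- Midpoint inequality. -/
lemma aux_mid (f : Eucl n → ℝ) (hf : ConvexOn ℝ univ f) (x d : Eucl n) (σ : ℝ) :
    f x + f x ≤ f (x + σ • d) + f (x - σ • d) := by
  have hcomb : (1/2 : ℝ) • (x + σ • d) + (1/2 : ℝ) • (x - σ • d) = x := by module
  have key := hf.2 (mem_univ (x + σ • d)) (mem_univ (x - σ • d))
    (by norm_num : (0:ℝ) ≤ 1/2) (by norm_num : (0:ℝ) ≤ 1/2) (by norm_num)
  rw [hcomb] at key
  simp only [smul_eq_mul] at key
  linarith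

def ddQ (f : Eucl n → ℝ) (x d : Eucl n) : Set ℝ :=
  (fun τ => (f (x + τ • d) - f x) / τ) '' Ioi 0

def ddN (f : Eucl n → ℝ) (x d : Eucl n) : ℝ := sInf (ddQ f x d)

lemma ddQ_nonempty (f : Eucl n → ℝ) (x d : Eucl n) : (ddQ f x d).Nonempty :=
  ⟨_, ⟨1, by norm_num, rfl⟩⟩

lemma ddQ_lb (f : Eucl n → ℝ) (hf : ConvexOn ℝ univ f) (x d : Eucl n) :
    ∀ r ∈ ddQ f x d, f x - f (x - d) ≤ r := by
  rintro r ⟨τ, hτ, rfl⟩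
  rw [mem_Ioi] at hτ
  rcases le_or_gt τ 1 with hτ1 | hτ1
  · have s1 := aux_slope f hf x (-d) hτ hτ1
    have e1 : x + τ • -d = x - τ • d := by module
    have e2 : x + (1:ℝ) • -d = x - d := by module
    rw [e1, e2, div_one] at s1
    have h2 : f (x - τ • d) - f x ≤ τ * (f (x - d) - f x) := by
      rw [div_le_iff₀ hτ] at s1; linarith [s1]
    have h1 := aux_mid f hf x d τ
    rw [le_div_iff₀ hτ]
    nlinarith [h1, h2]
  · have s1 := aux_slope f hf x d zero_lt_one hτ1.le
    rw [one_smul, div_one] at s1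
    have h1 := aux_mid f hf x d 1
    rw [one_smul] at h1
    have : f x - f (x - d) ≤ (f (x + d) - f x) := by linarith
    exact this.trans s1

lemma ddQ_bddBelow (f : Eucl n → ℝ) (hf : ConvexOn ℝ univ f) (x d : Eucl n) :
    BddBelow (ddQ f x d) := ⟨f x - f (x - d), ddQ_lb f hf x d⟩

lemma ddN_le (f : Eucl n → ℝ) (hf : ConvexOn ℝ univ f) (x d : Eucl n) {τ : ℝ} (hτ : 0 < τ) :
    ddN f x d ≤ (f (x + τ • d) - f x) / τ :=
  csInf_le (ddQ_bddBelow f hf x d) ⟨τ, hτ, rfl⟩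

lemma le_ddN (f : Eucl n → ℝ) (x d : Eucl n) {c : ℝ}
    (h : ∀ τ : ℝ, 0 < τ → c ≤ (f (x + τ • d) - f x) / τ) : c ≤ ddN f x d :=
  le_csInf (ddQ_nonempty f x d) (by rintro r ⟨τ, hτ, rfl⟩; exact h τ hτ)

lemma ddN_zero (f : Eucl n → ℝ) (x : Eucl n) : ddN f x 0 = 0 := by
  have : ddQ f x 0 = {0} := by
    ext r
    constructor
    · rintro ⟨τ, hτ, rfl⟩; simp
    · rintro rfl; exact ⟨1, by norm_num, by simp⟩
  rw [ddN, this, csInf_singleton]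

lemma ddN_smul (f : Eucl n → ℝ) (x d : Eucl n) {c : ℝ} (hc : 0 < c) :
    ddN f x (c • d) = c * ddN f x d := by
  have himg : ddQ f x (c • d) = c • ddQ f x d := by
    ext r
    constructor
    · rintro ⟨τ, hτ, rfl⟩
      rw [mem_Ioi] at hτ
      refine ⟨(f (x + (τ * c) • d) - f x) / (τ * c), ⟨τ * c, mem_Ioi.2 (by positivity), rfl⟩, ?_⟩
      show c • ((f (x + (τ * c) • d) - f x) / (τ * c)) = (f (x + τ • c • d) - f x) / τ
      rw [smul_smul, smul_eq_mul]
      field_simp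
    · rintro ⟨s, ⟨τ, hτ, rfl⟩, rfl⟩
      rw [mem_Ioi] at hτ
      refine ⟨τ / c, mem_Ioi.2 (by positivity), ?_⟩
      show (f (x + (τ / c) • c • d) - f x) / (τ / c) = c • ((f (x + τ • d) - f x) / τ)
      rw [smul_smul, div_mul_cancel₀ _ (ne_of_gt hc), smul_eq_mul]
      field_simp
  rw [ddN, ddN, himg, Real.sInf_smul_of_nonneg hc.le, smul_eq_mul]

lemma ddN_add (f : Eucl n → ℝ) (hf : ConvexOn ℝ univ f) (x u v : Eucl n) :
    ddN f x (u + v) ≤ ddN f x u + ddN f x v := by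
  refine le_of_forall_pos_le_add ?_
  intro ε hε
  obtain ⟨r1, hr1m, hr1⟩ := exists_lt_of_csInf_lt (ddQ_nonempty f x u)
    (show ddN f x u < ddN f x u + ε/2 by linarith)
  obtain ⟨τ1, hτ1, rfl⟩ := hr1m
  rw [mem_Ioi] at hτ1
  simp only at hr1
  obtain ⟨r2, hr2m, hr2⟩ := exists_lt_of_csInf_lt (ddQ_nonempty f x v)
    (show ddN f x v < ddN f x v + ε/2 by linarith)
  obtain ⟨τ2, hτ2, rfl⟩ := hr2m
  rw [mem_Ioi] at hτ2
  simp only at hr2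
  set τ : ℝ := min τ1 τ2 / 2 with hτdef
  have hτ0 : 0 < τ := by positivity
  have h2τ1 : 2 * τ ≤ τ1 := by
    rw [hτdef]; rw [mul_div_cancel₀]
    · exact min_le_left _ _
    · norm_num
  have h2τ2 : 2 * τ ≤ τ2 := by
    rw [hτdef]; rw [mul_div_cancel₀]
    · exact min_le_right _ _
    · norm_num
  have h2τ0 : 0 < 2 * τ := by positivity
  -- midpoint step
  have hcomb : (1/2 : ℝ) • (x + (2*τ) • u) + (1/2 : ℝ) • (x + (2*τ) • v) = x + τ • (u + v) := by
    module
  have key := hf.2 (mem_univ (x + (2*τ) • u)) (mem_univ (x + (2*τ) • v))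
    (by norm_num : (0:ℝ) ≤ 1/2) (by norm_num : (0:ℝ) ≤ 1/2) (by norm_num)
  rw [hcomb] at key
  simp only [smul_eq_mul] at key
  have step1 : (f (x + τ • (u + v)) - f x) / τ
      ≤ (f (x + (2*τ) • u) - f x) / (2*τ) + (f (x + (2*τ) • v) - f x) / (2*τ) := by
    rw [← add_div, div_le_div_iff₀ hτ0 h2τ0]
    nlinarith [mul_le_mul_of_nonneg_right key hτ0.le]
  have step2 : (f (x + (2*τ) • u) - f x) / (2*τ) ≤ (f (x + τ1 • u) - f x) / τ1 :=
    aux_slope f hf x u h2τ0 h2τ1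
  have step3 : (f (x + (2*τ) • v) - f x) / (2*τ) ≤ (f (x + τ2 • v) - f x) / τ2 :=
    aux_slope f hf x v h2τ0 h2τ2
  have := ddN_le f hf x (u + v) hτ0
  linarith

/-- Max formula: there is a subgradient achieving at least the directional derivative. -/
lemma aux_maxformula (f : Eucl n → ℝ) (hf : ConvexOn ℝ univ f) (x d : Eucl n) (hd : d ≠ 0) :
    ∃ ξ ∈ subdiff f x, ddN f x d ≤ ⟪ξ, d⟫ := by
  have hH : ∀ c : ℝ, c • d = (0 : Eucl n) → c • ddN f x d = 0 := by
    intro c hc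
    rcases smul_eq_zero.1 hc with rfl | h
    · simp
    · exact absurd h hd
  have hNd : ∀ c : ℝ, c * ddN f x d ≤ ddN f x (c • d) := by
    intro c
    rcases lt_trichotomy c 0 with h | rfl | h
    · have e1 : c • d = (-c) • (-d) := by module
      rw [e1, ddN_smul f x (-d) (by linarith : (0:ℝ) < -c)]
      have h2 : (0:ℝ) ≤ ddN f x d + ddN f x (-d) := by
        have h3 := ddN_add f hf x d (-d)
        rw [add_neg_cancel, ddN_zero] at h3
        linarith
      nlinarith
    · simp [ddN_zero]
    · rw [ddN_smul f x d h]
  obtain ⟨g, hg_eq, hg_le⟩ := exists_extension_of_le_sublinear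
      (LinearPMap.mkSpanSingleton' d (ddN f x d) hH) (ddN f x)
      (fun c hc z => ddN_smul f x z hc)
      (ddN_add f hf x)
      (by
        rintro ⟨z, hz⟩
        have hz' : z ∈ Submodule.span ℝ {d} := by
          rwa [LinearPMap.domain_mkSpanSingleton] at hz
        obtain ⟨c, rfl⟩ := Submodule.mem_span_singleton.1 hz'
        rw [LinearPMap.mkSpanSingleton'_apply, smul_eq_mul]
        exact hNd c)
  set ξ : Eucl n := (InnerProductSpace.toDual ℝ (Eucl n)).symm (LinearMap.toContinuousLinearMap g)
    with hξdef
  have hip : ∀ z : Eucl n, ⟪ξ, z⟫ = g z := by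
    intro z
    rw [hξdef, InnerProductSpace.toDual_symm_apply]
    simp
  refine ⟨ξ, ?_, ?_⟩
  · intro y
    have h1 : g (y - x) ≤ ddN f x (y - x) := hg_le _
    have h2 := ddN_le f hf x (y - x) one_pos
    rw [one_smul, div_one] at h2
    have e : x + (y - x) = y := by abel
    rw [e] at h2
    rw [hip]
    linarith
  · have hdmem : d ∈ (LinearPMap.mkSpanSingleton' (σ := RingHom.id ℝ) d (ddN f x d) hH).domain := by
      rw [LinearPMap.domain_mkSpanSingleton]
      exact Submodule.mem_span_singleton_self d
    have h1 := hg_eq ⟨d, hdmem⟩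
    rw [LinearPMap.mkSpanSingleton'_apply_self] at h1
    rw [hip, h1]

/-- Subdifferential is convex. -/
lemma subdiff_convex (f : Eucl n → ℝ) (x : Eucl n) : Convex ℝ (subdiff f x) := by
  intro ξ hξ η hη a b ha hb hab y
  have h1 := mul_le_mul_of_nonneg_left (hξ y) ha
  have h2 := mul_le_mul_of_nonneg_left (hη y) hb
  have e : ⟪a • ξ + b • η, y - x⟫ = a * ⟪ξ, y - x⟫ + b * ⟪η, y - x⟫ := by
    rw [inner_add_left, real_inner_smul_left, real_inner_smul_left]
  rw [e]
  have e2 : a * f x + b * f x = f x := by rw [← add_mul, hab, one_mul]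
  have e3 : a * f y + b * f y = f y := by rw [← add_mul, hab, one_mul]
  nlinarith [h1, h2]

/-- Subdifferential is closed. -/
lemma subdiff_isClosed (f : Eucl n → ℝ) (x : Eucl n) : IsClosed (subdiff f x) := by
  have e : subdiff f x = ⋂ y, {ξ : Eucl n | f x + ⟪ξ, y - x⟫ ≤ f y} := by
    ext ξ; simp [subdiff, Set.mem_iInter]
  rw [e]
  refine isClosed_iInter fun y => isClosed_le ?_ continuous_const
  exact continuous_const.add (Continuous.inner continuous_id continuous_const)

/-- Subdifferential is bounded. -/
lemma subdiff_bounded (f : Eucl n → ℝ) (hf : ConvexOn ℝ univ f) (x : Eucl n) :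
    ∃ R : ℝ, 0 ≤ R ∧ subdiff f x ⊆ Metric.closedBall 0 R := by
  have hc : Continuous f := by
    rw [← continuousOn_univ]
    exact hf.continuousOn isOpen_univ
  obtain ⟨z0, _, hz0⟩ := (isCompact_closedBall x 1).exists_isMaxOn
    ⟨x, by simp⟩ hc.continuousOn
  set M := f z0 with hM
  refine ⟨max 0 (M - f x), le_max_left _ _, ?_⟩
  intro ξ hξ
  rw [Metric.mem_closedBall, dist_zero_right]
  rcases eq_or_ne ξ 0 with rfl | hξ0
  · simp
  · have hn : 0 < ‖ξ‖ := norm_pos_iff.2 hξ0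
    have h1 := hξ (x + ‖ξ‖⁻¹ • ξ)
    have e1 : ⟪ξ, (x + ‖ξ‖⁻¹ • ξ) - x⟫ = ‖ξ‖ := by
      rw [add_sub_cancel_left, real_inner_smul_right, real_inner_self_eq_norm_sq]
      field_simp
    have hball : x + ‖ξ‖⁻¹ • ξ ∈ Metric.closedBall x 1 := by
      rw [Metric.mem_closedBall, dist_eq_norm, add_sub_cancel_left, norm_smul,
        norm_inv, norm_norm, inv_mul_cancel₀ (ne_of_gt hn)]
    have h2 := hz0 hball
    rw [e1] at h1
    have : ‖ξ‖ ≤ M - f x := by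
      have : f (x + ‖ξ‖⁻¹ • ξ) ≤ M := h2
      linarith
    exact this.trans (le_max_right _ _)

set_option maxHeartbeats 2000000 in
/-- The key existence lemma for the forward direction. -/
lemma aux_forward {n p : ℕ} (hn : 1 ≤ n) (hp : 1 ≤ p) (f : Fin p → Eucl n → ℝ)
    (hf : ∀ i, ConvexOn ℝ univ (f i)) (S : Set (Eucl n)) (hS : Convex ℝ S)
    (xh : Eucl n) (hxS : xh ∈ S) (ν : ℝ) (hν : 0 < ν)
    (hiso : ∀ x ∈ S, ∃ i, ν * ‖x - xh‖ ≤ f i x - f i xh)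
    (w : Eucl n) (hw : ‖w‖ ≤ ν) :
    ∃ (ξ : Fin p → Eucl n) (lam : Fin p → ℝ),
      (∀ i, ξ i ∈ subdiff (f i) xh) ∧ simplex lam ∧
      (∀ y ∈ S, ∑ i, lam i * ⟪ξ i - w, xh - y⟫ ≤ 0) := by
  classical
  -- a nonzero direction
  have hd0 : (EuclideanSpace.single (⟨0, hn⟩ : Fin n) (1:ℝ)) ≠ 0 := by
    intro h
    have := congrArg (fun v : Eucl n => v (⟨0, hn⟩ : Fin n)) h
    beta_reduce at this
    rw [EuclideanSpace.single_apply] at this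
    simp at this
  -- each subdifferential is nonempty
  have hsubne : ∀ i, (subdiff (f i) xh).Nonempty := by
    intro i
    obtain ⟨ξ, hξ, -⟩ := aux_maxformula (f i) (hf i) xh _ hd0
    exact ⟨ξ, hξ⟩
  choose ξc hξc using hsubne
  -- the mixture set D
  set Dset : Set (Eucl n) :=
    {z | ∃ (lam : Fin p → ℝ) (ξ : Fin p → Eucl n), simplex lam ∧
      (∀ i, ξ i ∈ subdiff (f i) xh) ∧ z = ∑ i, lam i • ξ i} with hDdef
  set Nset : Set (Eucl n) := {u | ∀ y ∈ S, ⟪u, y - xh⟫ ≤ 0} with hNdef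
  set C0 : Set (Eucl n) := {z | ∃ s : ℝ, 0 ≤ s ∧ ∃ y ∈ S, z = s • (y - xh)} with hC0def
  have i0 : Fin p := ⟨0, hp⟩
  -- D is nonempty
  have hDne : Dset.Nonempty := by
    refine ⟨∑ i, ((p:ℝ)⁻¹) • ξc i, fun _ => (p:ℝ)⁻¹, ξc, ⟨fun _ => by positivity, ?_⟩, hξc, rfl⟩
    rw [Finset.sum_const, Finset.card_univ, Fintype.card_fin, nsmul_eq_mul]
    field_simp
  -- D is convex
  have hDconv : Convex ℝ Dset := by
    rintro z1 ⟨lam, ξ, ⟨hl0, hl1⟩, hξ, rfl⟩ z2 ⟨mu, η, ⟨hm0, hm1⟩, hη, rfl⟩ a b ha hb hab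
    refine ⟨fun i => a * lam i + b * mu i,
      fun i => if h : a * lam i + b * mu i = 0 then ξ i else
        (a * lam i + b * mu i)⁻¹ • (a • (lam i • ξ i) + b • (mu i • η i)), ⟨?_, ?_⟩, ?_, ?_⟩
    · intro i
      exact add_nonneg (mul_nonneg ha (hl0 i)) (mul_nonneg hb (hm0 i))
    · rw [Finset.sum_add_distrib, ← Finset.mul_sum, ← Finset.mul_sum, hl1, hm1]
      simpa using hab
    · intro i
      by_cases h : a * lam i + b * mu i = 0
      · simp only [h, dif_pos]
        exact hξ i
      · simp only [h, dif_neg, not_false_iff]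
        have hρ : 0 < a * lam i + b * mu i :=
          lt_of_le_of_ne (add_nonneg (mul_nonneg ha (hl0 i)) (mul_nonneg hb (hm0 i)))
            (Ne.symm h)
        have e1 : (a * lam i + b * mu i)⁻¹ • (a • (lam i • ξ i) + b • (mu i • η i))
            = ((a * lam i) / (a * lam i + b * mu i)) • ξ i
              + ((b * mu i) / (a * lam i + b * mu i)) • η i := by
          rw [smul_add]
          simp only [smul_smul]
          rw [div_eq_inv_mul, div_eq_inv_mul]
        rw [e1]
        refine subdiff_convex (f i) xh (hξ i) (hη i)
          (div_nonneg (mul_nonneg ha (hl0 i)) hρ.le)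
          (div_nonneg (mul_nonneg hb (hm0 i)) hρ.le) ?_
        rw [← add_div, div_eq_one_iff_eq (ne_of_gt hρ)]
    · rw [Finset.smul_sum, Finset.smul_sum, ← Finset.sum_add_distrib]
      refine Finset.sum_congr rfl fun i _ => ?_
      by_cases h : a * lam i + b * mu i = 0
      · have h1 : a * lam i = 0 := by nlinarith [mul_nonneg ha (hl0 i), mul_nonneg hb (hm0 i)]
        have h2 : b * mu i = 0 := by nlinarith [mul_nonneg ha (hl0 i), mul_nonneg hb (hm0 i)]
        simp only [h, dif_pos]
        rw [smul_smul, smul_smul, h1, h2]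
        simp
      · simp only [h, dif_neg, not_false_iff]
        simp only [smul_smul]
        rw [mul_inv_cancel₀ h, one_smul]
  -- D is compact
  have hDcomp : IsCompact Dset := by
    choose R hR0 hR using fun i => subdiff_bounded (f i) (hf i) xh
    have hΛ : IsCompact {lam : Fin p → ℝ | simplex lam} := by
      refine IsCompact.of_isClosed_subset
        (isCompact_univ_pi fun _ => isCompact_Icc (a := (0:ℝ)) (b := 1)) ?_ ?_
      · have e : {lam : Fin p → ℝ | simplex lam}
            = (⋂ i, {lam : Fin p → ℝ | 0 ≤ lam i}) ∩ {lam : Fin p → ℝ | ∑ i, lam i = 1} := by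
          ext lam; simp [simplex, Set.mem_iInter, forall_and]
        rw [e]
        refine IsClosed.inter (isClosed_iInter fun i => ?_) ?_
        · exact isClosed_le continuous_const (continuous_apply i)
        · exact isClosed_eq (continuous_finset_sum _ fun i _ => continuous_apply i)
            continuous_const
      · rintro lam ⟨h0, h1⟩
        rw [Set.mem_univ_pi]
        intro i
        refine ⟨h0 i, ?_⟩
        calc lam i ≤ ∑ j, lam j :=
              Finset.single_le_sum (fun j _ => h0 j) (Finset.mem_univ i)
          _ = 1 := h1
    have hΞ : IsCompact (Set.pi univ fun i => subdiff (f i) xh) := by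
      refine isCompact_univ_pi fun i => ?_
      exact IsCompact.of_isClosed_subset (isCompact_closedBall 0 (R i))
        (subdiff_isClosed (f i) xh) (hR i)
    have e : Dset = (fun q : (Fin p → ℝ) × (Fin p → Eucl n) => ∑ i, q.1 i • q.2 i) ''
        ({lam : Fin p → ℝ | simplex lam} ×ˢ (Set.pi univ fun i => subdiff (f i) xh)) := by
      ext z
      constructor
      · rintro ⟨lam, ξ, hlam, hξ, rfl⟩
        exact ⟨(lam, ξ), ⟨hlam, fun i _ => hξ i⟩, rfl⟩
      · rintro ⟨⟨lam, ξ⟩, ⟨hlam, hξ⟩, rfl⟩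
        exact ⟨lam, ξ, hlam, fun i => hξ i (Set.mem_univ i), rfl⟩
    rw [e]
    exact (hΛ.prod hΞ).image
      (continuous_finset_sum _ fun i _ =>
        ((continuous_apply i).comp continuous_fst).smul
          ((continuous_apply i).comp continuous_snd))
  -- N facts
  have hN0 : (0 : Eucl n) ∈ Nset := by
    intro y hy
    simp
  have hNconv : Convex ℝ Nset := by
    intro u hu v hv a b ha hb hab y hy
    have h1 := mul_le_mul_of_nonneg_left (hu y hy) ha
    have h2 := mul_le_mul_of_nonneg_left (hv y hy) hb
    rw [inner_add_left, real_inner_smul_left, real_inner_smul_left]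
    nlinarith
  have hNsmul : ∀ (s : ℝ), 0 ≤ s → ∀ u ∈ Nset, s • u ∈ Nset := by
    intro s hs u hu y hy
    rw [real_inner_smul_left]
    exact mul_nonpos_of_nonneg_of_nonpos hs (hu y hy)
  have hNclosed : IsClosed Nset := by
    have e : Nset = ⋂ y ∈ S, {u : Eucl n | ⟪u, y - xh⟫ ≤ 0} := by
      ext u; simp [hNdef, Set.mem_iInter]
    rw [e]
    exact isClosed_biInter fun y _ =>
      isClosed_le (Continuous.inner continuous_id continuous_const) continuous_const
  -- D + N is closed
  have hDNclosed : IsClosed (Dset + Nset) := by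
    refine IsSeqClosed.isClosed ?_
    intro u a hu hua
    choose ξs hξD us hun hsum using fun k => Set.mem_add.1 (hu k)
    obtain ⟨ξl, hξl, φ, hφmono, hφtend⟩ := hDcomp.tendsto_subseq hξD
    have hutend : Tendsto (fun k => us (φ k)) atTop (𝓝 (a - ξl)) := by
      have e : (fun k => us (φ k)) = fun k => u (φ k) - ξs (φ k) := by
        funext k
        rw [← hsum (φ k)]
        abel
      rw [e]
      exact ((hua.comp hφmono.tendsto_atTop).sub hφtend)
    have hmem : a - ξl ∈ Nset :=
      hNclosed.mem_of_tendsto hutend (Filter.Eventually.of_forall fun k => hun (φ k))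
    exact Set.mem_add.2 ⟨ξl, hξl, a - ξl, hmem, by abel⟩
  -- pointwise estimate on the cone C0
  have hptwise : ∀ z ∈ C0, ∃ ξ ∈ Dset, ν * ‖z‖ ≤ ⟪ξ, z⟫ := by
    rintro z ⟨s, hs, y, hyS, rfl⟩
    by_cases hz : s • (y - xh) = 0
    · obtain ⟨ξ0, hξ0⟩ := hDne
      rw [hz]
      exact ⟨ξ0, hξ0, by simp⟩
    · have hs0 : 0 < s := by
        rcases hs.lt_or_eq with h | h
        · exact h
        · exact absurd (by rw [← h, zero_smul]) hz
      have hyx : y - xh ≠ 0 := by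
        intro h
        rw [h, smul_zero] at hz
        exact hz rfl
      have hynorm : 0 < ‖y - xh‖ := norm_pos_iff.2 hyx
      set c : ℝ := ν * ‖y - xh‖ with hcdef
      -- Step A
      have stepA : ∀ τ : ℝ, 0 < τ → τ ≤ 1 →
          ∃ i, c ≤ (f i (xh + τ • (y - xh)) - f i xh) / τ := by
        intro τ hτ0 hτ1
        have hyτ : xh + τ • (y - xh) ∈ S := by
          have hmem := hS hxS hyS (by linarith : (0:ℝ) ≤ 1 - τ) hτ0.le (by ring)
          have e : (1 - τ) • xh + τ • y = xh + τ • (y - xh) := by module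
          rwa [e] at hmem
        obtain ⟨i, hi⟩ := hiso _ hyτ
        refine ⟨i, ?_⟩
        have hnorm : ‖(xh + τ • (y - xh)) - xh‖ = τ * ‖y - xh‖ := by
          rw [add_sub_cancel_left, norm_smul, Real.norm_eq_abs, abs_of_pos hτ0]
        rw [hnorm] at hi
        rw [le_div_iff₀ hτ0]
        calc c * τ = ν * (τ * ‖y - xh‖) := by rw [hcdef]; ring
          _ ≤ _ := hi
      -- Step B
      have stepB : ∃ i, ∀ τ : ℝ, 0 < τ → τ ≤ 1 →
          c ≤ (f i (xh + τ • (y - xh)) - f i xh) / τ := by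
        by_contra hcon
        push_neg at hcon
        choose τs hτs0 hτs1 hτlt using hcon
        have hne : (Finset.univ : Finset (Fin p)).Nonempty := ⟨i0, Finset.mem_univ i0⟩
        set τm : ℝ := Finset.univ.inf' hne τs with hτmdef
        have hτm0 : 0 < τm := by
          rw [hτmdef, Finset.lt_inf'_iff]
          exact fun i _ => hτs0 i
        have hτm1 : τm ≤ 1 :=
          le_trans (Finset.inf'_le _ (Finset.mem_univ i0)) (hτs1 i0)
        obtain ⟨i, hi⟩ := stepA τm hτm0 hτm1
        have hmono := aux_slope (f i) (hf i) xh (y - xh) hτm0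
          (Finset.inf'_le _ (Finset.mem_univ i))
        exact absurd (hi.trans hmono) (not_le.2 (hτlt i))
      obtain ⟨i, hiB⟩ := stepB
      -- Step C : all τ > 0
      have stepC : ∀ τ : ℝ, 0 < τ → c ≤ (f i (xh + τ • (y - xh)) - f i xh) / τ := by
        intro τ hτ0
        rcases le_or_gt τ 1 with hτ1 | hτ1
        · exact hiB τ hτ0 hτ1
        · exact (hiB 1 one_pos le_rfl).trans
            (by simpa using aux_slope (f i) (hf i) xh (y - xh) one_pos hτ1.le)
      have stepD : c ≤ ddN (f i) xh (y - xh) := le_ddN _ _ _ stepC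
      obtain ⟨ξ, hξmem, hξd⟩ := aux_maxformula (f i) (hf i) xh (y - xh) hyx
      -- ξ belongs to Dset via indicator weights
      have hξD : ξ ∈ Dset := by
        refine ⟨fun j => if j = i then 1 else 0, Function.update ξc i ξ, ⟨?_, ?_⟩, ?_, ?_⟩
        · intro j
          dsimp only
          split <;> norm_num
        · simp
        · intro j
          rcases eq_or_ne j i with rfl | hji
          · rw [Function.update_self]
            exact hξmem
          · rw [Function.update_of_ne hji]
            exact hξc j
        · rw [Finset.sum_eq_single i]
          · simp
          · intro j _ hji
            simp [hji]
          · intro hmem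
            exact absurd (Finset.mem_univ i) hmem
      refine ⟨ξ, hξD, ?_⟩
      rw [real_inner_smul_right, norm_smul, Real.norm_eq_abs, abs_of_nonneg hs]
      have : c ≤ ⟪ξ, y - xh⟫ := stepD.trans hξd
      calc ν * (s * ‖y - xh‖) = s * c := by rw [hcdef]; ring
        _ ≤ s * ⟪ξ, y - xh⟫ := mul_le_mul_of_nonneg_left this hs0.le
  -- C0 is a convex cone containing 0
  have hC0zero : (0 : Eucl n) ∈ C0 := ⟨0, le_rfl, xh, hxS, by simp⟩
  have hC0smul : ∀ (s : ℝ), 0 ≤ s → ∀ z ∈ C0, s • z ∈ C0 := by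
    rintro s hs z ⟨s', hs', y, hy, rfl⟩
    exact ⟨s * s', mul_nonneg hs hs', y, hy, by rw [smul_smul]⟩
  have hC0conv : Convex ℝ C0 := by
    rintro z1 ⟨s1, hs1, y1, hy1, rfl⟩ z2 ⟨s2, hs2, y2, hy2, rfl⟩ a b ha hb hab
    by_cases hz : a * s1 + b * s2 = 0
    · have h1 : a * s1 = 0 := by nlinarith [mul_nonneg ha hs1, mul_nonneg hb hs2]
      have h2 : b * s2 = 0 := by nlinarith [mul_nonneg ha hs1, mul_nonneg hb hs2]
      refine ⟨0, le_rfl, xh, hxS, ?_⟩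
      rw [smul_smul, smul_smul, h1, h2, zero_smul, zero_smul, add_zero, zero_smul]
    · have hρ : 0 < a * s1 + b * s2 :=
        lt_of_le_of_ne (add_nonneg (mul_nonneg ha hs1) (mul_nonneg hb hs2)) (Ne.symm hz)
      refine ⟨a * s1 + b * s2, hρ.le,
        ((a * s1 + b * s2)⁻¹ * (a * s1)) • y1 + ((a * s1 + b * s2)⁻¹ * (b * s2)) • y2,
        hS hy1 hy2 (mul_nonneg (inv_nonneg.2 hρ.le) (mul_nonneg ha hs1))
          (mul_nonneg (inv_nonneg.2 hρ.le) (mul_nonneg hb hs2))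
          (by field_simp), ?_⟩
      match_scalars <;> field_simp <;> ring
  -- main case split
  by_cases hwmem : w ∈ Dset + Nset
  · obtain ⟨ξbar, hξbar, u, hu, hsum⟩ := Set.mem_add.1 hwmem
    obtain ⟨lam, ξ, hlam, hξ, rfl⟩ := hξbar
    refine ⟨ξ, lam, hξ, hlam, fun y hy => ?_⟩
    have e1 : ∑ i, lam i * ⟪ξ i - w, xh - y⟫ = ⟪(∑ i, lam i • ξ i) - w, xh - y⟫ := by
      have step1 : ∀ i : Fin p, lam i * ⟪ξ i - w, xh - y⟫
          = lam i * ⟪ξ i, xh - y⟫ - lam i * ⟪w, xh - y⟫ := by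
        intro i
        rw [inner_sub_left]
        ring
      rw [Finset.sum_congr rfl fun i _ => step1 i, Finset.sum_sub_distrib,
        ← Finset.sum_mul, hlam.2, one_mul, inner_sub_left, sum_inner]
      simp only [real_inner_smul_left]
    have e2 : (∑ i, lam i • ξ i) - w = -u := by
      rw [← hsum]
      abel
    rw [e1, e2, inner_neg_left]
    have e3 : xh - y = -(y - xh) := by abel
    rw [e3, inner_neg_right, neg_neg]
    exact hu y hy
  · exfalso
    obtain ⟨φ, u₀, hφlt, hφw⟩ :=
      geometric_hahn_banach_closed_point (hDconv.add hNconv) hDNclosed hwmem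
    set d : Eucl n := (InnerProductSpace.toDual ℝ (Eucl n)).symm φ with hddef
    have hdip : ∀ z : Eucl n, ⟪d, z⟫ = φ z := by
      intro z
      rw [hddef, InnerProductSpace.toDual_symm_apply]
    have hDlt : ∀ ξ ∈ Dset, ⟪d, ξ⟫ < u₀ := by
      intro ξ hξ
      rw [hdip]
      exact hφlt _ (Set.mem_add.2 ⟨ξ, hξ, 0, hN0, add_zero ξ⟩)
    have hNle : ∀ u ∈ Nset, ⟪d, u⟫ ≤ 0 := by
      intro u hu
      by_contra hcon
      push_neg at hcon
      obtain ⟨ξ0, hξ0⟩ := hDne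
      set s : ℝ := (u₀ - ⟪d, ξ0⟫) / ⟪d, u⟫ with hsdef
      have hd0' : ⟪d, ξ0⟫ < u₀ := hDlt ξ0 hξ0
      have hs : 0 < s := div_pos (by linarith) hcon
      have hmem : ξ0 + s • u ∈ Dset + Nset :=
        Set.add_mem_add hξ0 (hNsmul s hs.le u hu)
      have := hφlt _ hmem
      rw [← hdip, inner_add_right, real_inner_smul_right, hsdef,
        div_mul_cancel₀ _ (ne_of_gt hcon)] at this
      linarith
    have hwd : u₀ < ⟪d, w⟫ := by
      rw [hdip]
      exact hφw
    -- d lies in the closure of the cone C0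
    have hdC : d ∈ closure C0 := by
      by_contra hdC
      obtain ⟨ψ, cc, hψC, hψd⟩ :=
        geometric_hahn_banach_closed_point (hC0conv.closure) isClosed_closure hdC
      set uu : Eucl n := (InnerProductSpace.toDual ℝ (Eucl n)).symm ψ with huudef
      have huuip : ∀ z : Eucl n, ⟪uu, z⟫ = ψ z := by
        intro z
        rw [huudef, InnerProductSpace.toDual_symm_apply]
      have hc0 : 0 < cc := by
        have := hψC 0 (subset_closure hC0zero)
        simpa using this
      have hψle : ∀ z ∈ C0, ψ z ≤ 0 := by
        intro z hz
        by_contra hcon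
        push_neg at hcon
        have hsz : (0:ℝ) < cc / ψ z := div_pos hc0 hcon
        have hzC : (cc / ψ z) • z ∈ C0 := hC0smul _ hsz.le z hz
        have := hψC _ (subset_closure hzC)
        rw [map_smul, smul_eq_mul, div_mul_cancel₀ _ (ne_of_gt hcon)] at this
        exact lt_irrefl cc this
      have huN : uu ∈ Nset := by
        intro y hy
        rw [huuip]
        exact hψle _ ⟨1, zero_le_one, y, hy, (one_smul ℝ _).symm⟩
      have h1 := hNle uu huN
      have h2 : cc < ψ d := hψd
      rw [← huuip d] at h2
      rw [real_inner_comm] at h1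
      linarith
    -- final contradiction
    obtain ⟨RD, hRDsub⟩ := hDcomp.isBounded.subset_closedBall 0
    have hRDbd : ∀ ξ ∈ Dset, ‖ξ‖ ≤ RD := by
      intro ξ hξ
      have := hRDsub hξ
      rwa [Metric.mem_closedBall, dist_zero_right] at this
    obtain ⟨ξw, hξw⟩ := hDne
    have hRD0 : 0 ≤ RD := le_trans (norm_nonneg _) (hRDbd _ hξw)
    have hνd : u₀ < ν * ‖d‖ := by
      refine hwd.trans_le ?_
      calc ⟪d, w⟫ ≤ ‖d‖ * ‖w‖ := real_inner_le_norm d w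
        _ ≤ ‖d‖ * ν := mul_le_mul_of_nonneg_left hw (norm_nonneg d)
        _ = ν * ‖d‖ := mul_comm _ _
    set ε : ℝ := (ν * ‖d‖ - u₀) / (ν + RD + 1) with hεdef
    have hden : 0 < ν + RD + 1 := by linarith
    have hε : 0 < ε := div_pos (by linarith) hden
    have hεeq : ε * (ν + RD + 1) = ν * ‖d‖ - u₀ := div_mul_cancel₀ _ (ne_of_gt hden)
    obtain ⟨z, hzC, hzd⟩ := Metric.mem_closure_iff.1 hdC ε hε
    rw [dist_eq_norm] at hzd
    obtain ⟨ξ, hξD, hξz⟩ := hptwise z hzC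
    have h1 : ⟪ξ, d⟫ < u₀ := by
      rw [real_inner_comm]
      exact hDlt ξ hξD
    have h2 : ⟪ξ, d⟫ = ⟪ξ, z⟫ + ⟪ξ, d - z⟫ := by
      rw [← inner_add_right]
      congr 1
      abel
    have h3 : |⟪ξ, d - z⟫| ≤ RD * ε := by
      calc |⟪ξ, d - z⟫| ≤ ‖ξ‖ * ‖d - z‖ := abs_real_inner_le_norm _ _
        _ ≤ RD * ε := mul_le_mul (hRDbd ξ hξD) hzd.le (norm_nonneg _) hRD0
    have h4 : ‖d‖ - ε ≤ ‖z‖ := by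
      have := norm_sub_norm_le d z
      linarith
    have h5 : ν * (‖d‖ - ε) ≤ ν * ‖z‖ := mul_le_mul_of_nonneg_left h4 hν.le
    have h6 := abs_le.1 h3
    nlinarith [hξz, h1, h2, h5, h6.1, hεeq]

end AuxProofs

variable {n p : ℕ} {T : Type*}

/-- Suppose `(P)` is continuous, all constraints are continuously
differentiable around `x̂ ∈ S`, and MFCQ holds at `x̂`. Then `x̂` is an isolated efficient
solution of `(P)` iff there is `ν > 0` such that for all `w` with `‖w‖ ≤ ν` there are
`ξ_i ∈ ∂f_i(x̂)` and `λ` in the unit simplex with `ϑ(x̂, ξ − w, λ) = 0`. -/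
theorem stmt14
    [TopologicalSpace T] [CompactSpace T] [T2Space T]
    (hn : 1 ≤ n) (hp : 1 ≤ p)
    (f : Fin p → Eucl n → ℝ) (g : T → Eucl n → EReal)
    (hf : ∀ i, ConvexOn ℝ Set.univ (f i))
    (hgconv : ∀ t, ConvexE (g t))
    (hgproper : ∀ t, ProperE (g t))
    (hglsc : ∀ t, LowerSemicontinuous (g t))
    (xh : Eucl n) (hxS : xh ∈ feasSet g)
    (gR : T → Eucl n → ℝ) (hgR : ∀ t x, g t x = ((gR t x : ℝ) : EReal))
    (hcont : Continuous fun q : T × Eucl n => gR q.1 q.2)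
    (hsmooth : ∀ t, ∃ U ∈ 𝓝 xh, ContDiffOn ℝ 1 (gR t) U)
    (hmfcq : MFCQ g xh) :
    (∃ ν : ℝ, 0 < ν ∧ IsolatedEff f (feasSet g) xh ν) ↔
      (∃ ν : ℝ, 0 < ν ∧ ∀ w : Eucl n, ‖w‖ ≤ ν →
        ∃ (ξ : Fin p → Eucl n) (lam : Fin p → ℝ),
          (∀ i, ξ i ∈ subdiff (f i) xh) ∧ simplex lam ∧
          gapFn (feasSet g) xh (fun i => ξ i - w) lam = 0) := by
  have hSconv : Convex ℝ (feasSet g) := by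
    intro a ha b hb α β hα hβ hαβ t
    have h := hgconv t a b α β hα hβ hαβ
    rw [hgR t a, hgR t b, hgR t (α • a + β • b), ← EReal.coe_mul, ← EReal.coe_mul,
      ← EReal.coe_add] at h
    have hh := EReal.coe_le_coe_iff.1 h
    have ha' : gR t a ≤ 0 := by
      have h2 := ha t
      rw [hgR t a] at h2
      exact EReal.coe_nonpos.1 h2
    have hb' : gR t b ≤ 0 := by
      have h2 := hb t
      rw [hgR t b] at h2
      exact EReal.coe_nonpos.1 h2
    show g t (α • a + β • b) ≤ 0
    rw [hgR]
    refine EReal.coe_nonpos.2 ?_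
    nlinarith [mul_le_mul_of_nonneg_left ha' hα, mul_le_mul_of_nonneg_left hb' hβ]
  constructor
  · rintro ⟨ν, hν, hiso⟩
    refine ⟨ν, hν, fun w hw => ?_⟩
    obtain ⟨ξ, lam, hξ, hlam, hineq⟩ :=
      aux_forward hn hp f hf (feasSet g) hSconv xh hxS ν hν hiso w hw
    refine ⟨ξ, lam, hξ, hlam, ?_⟩
    simp only [gapFn]
    refine le_antisymm ?_ ?_
    · refine iSup₂_le fun y hy => ?_
      rw [← EReal.coe_zero]
      exact EReal.coe_le_coe_iff.2 (hineq y hy)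
    · have h0 :
          ((∑ i, lam i * ⟪ξ i - w, xh - xh⟫ : ℝ) : EReal)
            ≤ ⨆ y ∈ feasSet g, ((∑ i, lam i * ⟪ξ i - w, xh - y⟫ : ℝ) : EReal) :=
        le_iSup₂ (f := fun y (_ : y ∈ feasSet g) =>
          ((∑ i, lam i * ⟪ξ i - w, xh - y⟫ : ℝ) : EReal)) xh hxS
      simpa using h0
  · rintro ⟨ν, hν, H⟩
    refine ⟨ν, hν, ?_⟩
    intro x hx
    rcases eq_or_ne x xh with rfl | hne
    · exact ⟨⟨0, hp⟩, by simp⟩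
    · have hxx : 0 < ‖x - xh‖ := by
        rw [norm_pos_iff, sub_ne_zero]
        exact hne
      set w : Eucl n := (ν / ‖x - xh‖) • (x - xh) with hwdef
      have hw : ‖w‖ ≤ ν := by
        rw [hwdef, norm_smul, Real.norm_eq_abs, abs_of_nonneg (by positivity),
          div_mul_cancel₀ _ (ne_of_gt hxx)]
      obtain ⟨ξ, lam, hξ, ⟨hl0, hl1⟩, hgap⟩ := H w hw
      simp only [gapFn] at hgap
      have hle : ((∑ i, lam i * ⟪ξ i - w, xh - x⟫ : ℝ) : EReal)
          ≤ ⨆ y ∈ feasSet g, ((∑ i, lam i * ⟪ξ i - w, xh - y⟫ : ℝ) : EReal) :=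
        le_iSup₂ (f := fun y (_ : y ∈ feasSet g) =>
          ((∑ i, lam i * ⟪ξ i - w, xh - y⟫ : ℝ) : EReal)) x hx
      rw [hgap, ← EReal.coe_zero] at hle
      have key : (∑ i, lam i * ⟪ξ i - w, xh - x⟫ : ℝ) ≤ 0 := EReal.coe_le_coe_iff.1 hle
      have hwinner : ⟪w, x - xh⟫ = ν * ‖x - xh‖ := by
        rw [hwdef, real_inner_smul_left, real_inner_self_eq_norm_sq]
        field_simp
      by_contra hcon
      push_neg at hcon
      have hsub : ∀ i, ⟪ξ i, x - xh⟫ ≤ f i x - f i xh := by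
        intro i
        have h2 := hξ i x
        linarith
      have e1 : ∀ i : Fin p, lam i * ⟪ξ i - w, xh - x⟫
          = lam i * ⟪w, x - xh⟫ - lam i * ⟪ξ i, x - xh⟫ := by
        intro i
        have e : xh - x = -(x - xh) := by abel
        rw [e, inner_neg_right, inner_sub_left]
        ring
      rw [Finset.sum_congr rfl fun i _ => e1 i, Finset.sum_sub_distrib, ← Finset.sum_mul,
        hl1, one_mul, hwinner] at key
      obtain ⟨j, hj⟩ : ∃ j, 0 < lam j := by
        by_contra hc
        push_neg at hc
        have hsle : ∑ i, lam i ≤ 0 := Finset.sum_nonpos fun i _ => hc i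
        rw [hl1] at hsle
        linarith
      have hlt : ∑ i, lam i * ⟪ξ i, x - xh⟫ < ∑ i, lam i * (ν * ‖x - xh‖) := by
        refine Finset.sum_lt_sum (fun i _ => ?_) ⟨j, Finset.mem_univ j, ?_⟩
        · exact mul_le_mul_of_nonneg_left ((hsub i).trans (hcon i).le) (hl0 i)
        · exact mul_lt_mul_of_pos_left (lt_of_le_of_lt (hsub j) (hcon j)) hj
      rw [← Finset.sum_mul, hl1, one_mul] at hlt
      linarith

end MOSIP
end
end

section
/- If x̂ ∈ S satisfies G(x̂) ≠ ∅ and the perturbed Mangasarian–Fromovitz constraint qualification (PMFCQ) holds at x̂, then the Mangasarian–Fromovitz constraint qualification (MFCQ) holds at x̂. -/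
open Set Filter Topology
open scoped RealInnerProductSpace Pointwise

noncomputable section

namespace MOSIP

variable {n : ℕ} {T : Type*} {p : ℕ}

variable {n p : ℕ} {T : Type*}

/-- If `x̂ ∈ S` satisfies `G(x̂) ≠ ∅` and PMFCQ holds at `x̂`, then MFCQ
holds at `x̂`. -/
theorem stmt17
    (hn : 1 ≤ n) (hp : 1 ≤ p)
    (f : Fin p → Eucl n → ℝ) (g : T → Eucl n → EReal)
    (hf : ∀ i, ConvexOn ℝ Set.univ (f i))
    (hgconv : ∀ t, ConvexE (g t))
    (hgproper : ∀ t, ProperE (g t))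
    (hglsc : ∀ t, LowerSemicontinuous (g t))
    (xh : Eucl n) (hxS : xh ∈ feasSet g)
    (hG : (GSet g xh).Nonempty) (hpmfcq : PMFCQ g xh) :
    MFCQ g xh := by
  obtain ⟨xs, hxs⟩ := hpmfcq
  refine ⟨hG, xs, ?_⟩
  -- extract some ε > 0 with the sup negative
  rw [iInf_lt_iff] at hxs
  obtain ⟨ε, hε⟩ := hxs
  rw [iInf_lt_iff] at hε
  obtain ⟨hεpos, hsup⟩ := hε
  intro ξ hξ
  -- GSet ⊆ ε-active union
  have hmem : ξ ∈ ⋃ t ∈ activeIxEps g xh ε, subdiffE (g t) xh := by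
    simp only [GSet, Set.mem_iUnion] at hξ ⊢
    obtain ⟨t, ht, hξt⟩ := hξ
    refine ⟨t, ?_, hξt⟩
    simp only [activeIxEps, Set.mem_setOf_eq, ht]
    have : ((-ε : ℝ) : EReal) ≤ (0 : EReal) := by
      exact_mod_cast (neg_nonpos.mpr (le_of_lt hεpos))
    have ht' : g t xh = 0 := ht
    rw [ht']
    exact this
  have hle : ((⟪ξ, xs⟫ : ℝ) : EReal) ≤
      ⨆ ζ ∈ ⋃ t ∈ activeIxEps g xh ε, subdiffE (g t) xh, ((⟪ζ, xs⟫ : ℝ) : EReal) :=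
    le_biSup (fun ζ => ((⟪ζ, xs⟫ : ℝ) : EReal)) hmem
  have hlt : ((⟪ξ, xs⟫ : ℝ) : EReal) < ((0 : ℝ) : EReal) := by
    exact lt_of_le_of_lt hle (by simpa using hsup)
  exact_mod_cast hlt

end MOSIP
end
end

section
/- If x̂ ∈ S satisfies G(x̂) ≠ ∅, then the local Farkas–Minkowski constraint qualification (LFMCQ) holds at x̂ if and only if both the Abadie constraint qualification (ACQ) and the closed cone constraint qualification (CCCQ) hold at x̂. -/
open Set Filter Topology
open scoped RealInnerProductSpace Pointwise

noncomputable section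

namespace MOSIP

variable {n : ℕ} {T : Type*} {p : ℕ}

variable {n p : ℕ} {T : Type*}

section Aux

lemma mem_coneHull_self {M : Set (Eucl n)} {v : Eucl n} (hv : v ∈ M) : v ∈ coneHull M :=
  ⟨{v}, fun _ => 1, by simpa, fun _ _ => zero_le_one, by simp⟩

lemma zero_mem_coneHull (M : Set (Eucl n)) : (0 : Eucl n) ∈ coneHull M :=
  ⟨∅, fun _ => 0, by simp, by simp, by simp⟩

lemma coneHull_add_mem {M : Set (Eucl n)} {x y : Eucl n} (hx : x ∈ coneHull M)
    (hy : y ∈ coneHull M) : x + y ∈ coneHull M := by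
  classical
  obtain ⟨s₁, c₁, hs₁, hc₁, rfl⟩ := hx
  obtain ⟨s₂, c₂, hs₂, hc₂, rfl⟩ := hy
  refine ⟨s₁ ∪ s₂, fun v => (if v ∈ s₁ then c₁ v else 0) + (if v ∈ s₂ then c₂ v else 0),
    ?_, ?_, ?_⟩
  · intro v hv
    rcases Finset.mem_union.1 (by exact_mod_cast hv) with h | h
    exacts [hs₁ h, hs₂ h]
  · intro v _
    have h1 : (0:ℝ) ≤ if v ∈ s₁ then c₁ v else 0 := by
      split
      · exact hc₁ _ ‹_›
      · exact le_refl _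
    have h2 : (0:ℝ) ≤ if v ∈ s₂ then c₂ v else 0 := by
      split
      · exact hc₂ _ ‹_›
      · exact le_refl _
    exact add_nonneg h1 h2
  · have h1 : ∑ v ∈ s₁ ∪ s₂, (if v ∈ s₁ then c₁ v else 0) • v = ∑ v ∈ s₁, c₁ v • v := by
      simp only [ite_smul, zero_smul]
      rw [Finset.sum_ite_mem, Finset.union_inter_cancel_left]
    have h2 : ∑ v ∈ s₁ ∪ s₂, (if v ∈ s₂ then c₂ v else 0) • v = ∑ v ∈ s₂, c₂ v • v := by
      simp only [ite_smul, zero_smul]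
      rw [Finset.sum_ite_mem, Finset.union_inter_cancel_right]
    simp only [add_smul, Finset.sum_add_distrib, h1, h2]

lemma coneHull_smul_mem {M : Set (Eucl n)} {c : ℝ} (hc : 0 ≤ c) {x : Eucl n}
    (hx : x ∈ coneHull M) : c • x ∈ coneHull M := by
  obtain ⟨s, d, hs, hd, rfl⟩ := hx
  exact ⟨s, fun v => c * d v, hs, fun v hv => mul_nonneg hc (hd v hv), by
    rw [Finset.smul_sum]; simp [smul_smul]⟩

/-- `coneHull M` as a `ConvexCone`. -/
def coneHullCone (M : Set (Eucl n)) : ConvexCone ℝ (Eucl n) where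
  carrier := coneHull M
  smul_mem' := fun _ hc _ hx => coneHull_smul_mem (le_of_lt hc) hx
  add_mem' := fun _ hx _ hy => coneHull_add_mem hx hy

lemma negPolar_anti {A B : Set (Eucl n)} (h : A ⊆ B) : negPolar B ⊆ negPolar A :=
  fun _ hd ξ hξ => hd ξ (h hξ)

lemma isClosed_negPolar (M : Set (Eucl n)) : IsClosed (negPolar M) := by
  have : negPolar M = ⋂ ξ ∈ M, {d : Eucl n | ⟪ξ, d⟫ ≤ 0} := by
    ext d; simp [negPolar]
  rw [this]
  exact isClosed_biInter fun ξ _ =>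
    isClosed_le (continuous_const.inner continuous_id) continuous_const

lemma coneHull_subset_negPolar {M P : Set (Eucl n)} (h : M ⊆ negPolar P) :
    coneHull M ⊆ negPolar P := by
  rintro x ⟨s, c, hs, hc, rfl⟩ ξ hξ
  rw [inner_sum]
  refine Finset.sum_nonpos fun v hv => ?_
  rw [real_inner_smul_right]
  exact mul_nonpos_of_nonneg_of_nonpos (hc v hv) (h (hs hv) ξ hξ)

lemma negPolar_coneHull (M : Set (Eucl n)) : negPolar (coneHull M) = negPolar M := by
  apply le_antisymm
  · exact negPolar_anti fun v hv => mem_coneHull_self hv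
  · rintro d hd x ⟨s, c, hs, hc, rfl⟩
    rw [sum_inner]
    refine Finset.sum_nonpos fun v hv => ?_
    rw [real_inner_smul_left]
    exact mul_nonpos_of_nonneg_of_nonpos (hc v hv) (hd v (hs hv))

/-- Bipolar theorem in `negPolar` form. -/
lemma negPolar_negPolar (K : ConvexCone ℝ (Eucl n)) (hne : (K : Set (Eucl n)).Nonempty)
    (hcl : IsClosed (K : Set (Eucl n))) :
    negPolar (negPolar (K : Set (Eucl n))) = (K : Set (Eucl n)) := by
  apply le_antisymm
  · intro d hd
    by_contra hdK
    obtain ⟨F, u, hFu, huF⟩ := geometric_hahn_banach_closed_point K.convex hcl hdK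
    set y := (InnerProductSpace.toDual ℝ (Eucl n)).symm F with hy
    have hyF : ∀ v, ⟪y, v⟫ = F v := fun v => InnerProductSpace.toDual_symm_apply
    have hKF : ∀ k ∈ (K : Set (Eucl n)), F k ≤ 0 := by
      intro k hk
      by_contra hpos
      push_neg at hpos
      have hc : (0:ℝ) < (|u| + 1) / F k := div_pos (by positivity) hpos
      have hmem : ((|u| + 1) / F k) • k ∈ (K : Set (Eucl n)) := (K.smul_mem_iff hc).2 hk
      have := hFu _ hmem
      rw [map_smul, smul_eq_mul, div_mul_cancel₀ _ hpos.ne'] at this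
      linarith [le_abs_self u]
    have hu : 0 ≤ u := by
      obtain ⟨x0, hx0⟩ := hne
      by_contra hneg
      push_neg at hneg
      have hF0 : F x0 < 0 := lt_trans (hFu x0 hx0) hneg
      have hc : (0:ℝ) < u / (2 * F x0) := div_pos_of_neg_of_neg hneg (by linarith)
      have hmem : (u / (2 * F x0)) • x0 ∈ (K : Set (Eucl n)) := (K.smul_mem_iff hc).2 hx0
      have := hFu _ hmem
      rw [map_smul, smul_eq_mul] at this
      have e : u / (2 * F x0) * F x0 = u / 2 := by
        have := hF0.ne; field_simp
      linarith
    have hyN : y ∈ negPolar (K : Set (Eucl n)) := by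
      intro k hk
      rw [real_inner_comm, hyF]
      exact hKF k hk
    have := hd y hyN
    rw [hyF] at this
    linarith
  · intro d hdK ξ hξ
    rw [real_inner_comm]
    exact hξ d hdK

/-- The cone of feasible rays emanating from `x`. -/
def rayCone (S : Set (Eucl n)) (x : Eucl n) : Set (Eucl n) :=
  {y | ∃ l : ℝ, 0 ≤ l ∧ ∃ s ∈ S, y = l • (s - x)}

lemma rayCone_add_mem {S : Set (Eucl n)} (hS : Convex ℝ S) {x y₁ y₂ : Eucl n}
    (h₁ : y₁ ∈ rayCone S x) (h₂ : y₂ ∈ rayCone S x) : y₁ + y₂ ∈ rayCone S x := by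
  obtain ⟨l₁, hl₁, s₁, hs₁, rfl⟩ := h₁
  obtain ⟨l₂, hl₂, s₂, hs₂, rfl⟩ := h₂
  rcases eq_or_lt_of_le (add_nonneg hl₁ hl₂ : (0:ℝ) ≤ l₁ + l₂) with h0 | h0
  · have e₁ : l₁ = 0 := by linarith
    have e₂ : l₂ = 0 := by linarith
    exact ⟨0, le_refl 0, s₁, hs₁, by simp [e₁, e₂]⟩
  · have hL : l₁ + l₂ ≠ 0 := ne_of_gt h0
    have ha : (l₁ + l₂) * (l₁ / (l₁ + l₂)) = l₁ := by field_simp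
    have hb : (l₁ + l₂) * (l₂ / (l₁ + l₂)) = l₂ := by field_simp
    have hs : (l₁ / (l₁ + l₂)) • s₁ + (l₂ / (l₁ + l₂)) • s₂ ∈ S :=
      hS hs₁ hs₂ (div_nonneg hl₁ h0.le) (div_nonneg hl₂ h0.le) (by field_simp)
    refine ⟨l₁ + l₂, h0.le, _, hs, ?_⟩
    rw [smul_sub, smul_sub, smul_sub, smul_add, smul_smul, smul_smul, ha, hb, add_smul]
    abel

/-- `rayCone` as a `ConvexCone`. -/
def rayConeCone {S : Set (Eucl n)} (hS : Convex ℝ S) (x : Eucl n) : ConvexCone ℝ (Eucl n) where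
  carrier := rayCone S x
  smul_mem' := by
    rintro c hc y ⟨l, hl, s, hs, rfl⟩
    exact ⟨c * l, mul_nonneg hc.le hl, s, hs, by rw [smul_smul]⟩
  add_mem' := fun _ h₁ _ h₂ => rayCone_add_mem hS h₁ h₂

lemma segment_mem_of_convex {S : Set (Eucl n)} (hS : Convex ℝ S) {x s : Eucl n}
    (hx : x ∈ S) (hs : s ∈ S) {μ : ℝ} (h0 : 0 ≤ μ) (h1 : μ ≤ 1) : x + μ • (s - x) ∈ S := by
  have h := hS hx hs (by linarith : (0:ℝ) ≤ 1 - μ) h0 (by ring)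
  have : (1 - μ) • x + μ • s = x + μ • (s - x) := by
    rw [sub_smul, one_smul, smul_sub]; abel
  rwa [this] at h

lemma contingent_eq_closure_rayCone {S : Set (Eucl n)} (hS : Convex ℝ S) {x : Eucl n}
    (hx : x ∈ S) : contingentCone S x = closure (rayCone S x) := by
  apply le_antisymm
  · rintro v ⟨τ, w, hτpos, _, hwv, hmem⟩
    refine mem_closure_of_tendsto hwv (Eventually.of_forall fun r => ?_)
    refine ⟨(τ r)⁻¹, (inv_pos.2 (hτpos r)).le, x + τ r • w r, hmem r, ?_⟩
    rw [add_sub_cancel_left, smul_smul, inv_mul_cancel₀ (ne_of_gt (hτpos r)), one_smul]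
  · intro v hv
    obtain ⟨u, hu, huv⟩ := mem_closure_iff_seq_limit.1 hv
    choose l hl s hsS hus using hu
    have hlpos : ∀ k, (0:ℝ) < 1 + l k := fun k => by linarith [hl k]
    have hτpos : ∀ k : ℕ, (0:ℝ) < (1 / (k + 1 : ℝ)) * (1 / (1 + l k)) := by
      intro k
      have hk : (0:ℝ) < (k:ℝ) + 1 := by positivity
      exact mul_pos (by positivity) (one_div_pos.2 (hlpos k))
    refine ⟨fun k => (1 / (k + 1 : ℝ)) * (1 / (1 + l k)), u, hτpos, ?_, huv, ?_⟩
    · apply squeeze_zero (fun k => (hτpos k).le)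
        (g := fun k : ℕ => 1 / (k + 1 : ℝ)) (fun k => ?_) tendsto_one_div_add_atTop_nhds_zero_nat
      have hk : (0:ℝ) < (k:ℝ) + 1 := by positivity
      have h1 : 1 / (1 + l k) ≤ 1 := by
        rw [div_le_one (hlpos k)]; linarith [hl k]
      calc 1 / ((k:ℝ) + 1) * (1 / (1 + l k)) ≤ 1 / ((k:ℝ) + 1) * 1 :=
            mul_le_mul_of_nonneg_left h1 (by positivity)
        _ = 1 / ((k:ℝ) + 1) := mul_one _
    · intro k
      rw [hus k, smul_smul]
      set μ := (1 / (k + 1 : ℝ)) * (1 / (1 + l k)) * l k with hμ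
      have hk : (0:ℝ) < (k:ℝ) + 1 := by positivity
      have hμ0 : 0 ≤ μ := mul_nonneg (hτpos k).le (hl k)
      have hμ1 : μ ≤ 1 := by
        have h1 : 1 / ((k:ℝ) + 1) ≤ 1 := by
          rw [div_le_one hk]; linarith
        have h2 : (1 / (1 + l k)) * l k ≤ 1 := by
          rw [div_mul_eq_mul_div, one_mul, div_le_one (hlpos k)]; linarith [hl k]
        have h2' : (0:ℝ) ≤ (1 / (1 + l k)) * l k :=
          mul_nonneg (one_div_pos.2 (hlpos k)).le (hl k)
        calc μ = (1 / ((k:ℝ) + 1)) * ((1 / (1 + l k)) * l k) := by rw [hμ]; ring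
          _ ≤ 1 * 1 := mul_le_mul h1 h2 h2' (by norm_num)
          _ = 1 := by norm_num
      exact segment_mem_of_convex hS hx (hsS k) hμ0 hμ1

lemma GSet_subset_normalCone (g : T → Eucl n → EReal) (xh : Eucl n) (hx : xh ∈ feasSet g) :
    GSet g xh ⊆ normalCone (feasSet g) xh := by
  intro ξ hξ
  rw [GSet, mem_iUnion₂] at hξ
  obtain ⟨t, ht, hξ⟩ := hξ
  rintro v ⟨τ, w, hτpos, _, hwv, hmem⟩
  have key : ∀ r, ⟪ξ, w r⟫ ≤ 0 := by
    intro r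
    have h1 := hξ (xh + τ r • w r)
    have ht' : g t xh = 0 := ht
    rw [ht', zero_add] at h1
    have h2 : g t (xh + τ r • w r) ≤ 0 := hmem r t
    have h3 : ((⟪ξ, (xh + τ r • w r) - xh⟫ : ℝ) : EReal) ≤ 0 := le_trans h1 h2
    have h4 : (⟪ξ, (xh + τ r • w r) - xh⟫ : ℝ) ≤ 0 := by exact_mod_cast h3
    rw [add_sub_cancel_left, real_inner_smul_right] at h4
    nlinarith [hτpos r]
  have htend : Tendsto (fun r => ⟪ξ, w r⟫) atTop (𝓝 ⟪ξ, v⟫) :=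
    Tendsto.inner tendsto_const_nhds hwv
  have := le_of_tendsto htend (Eventually.of_forall key)
  rw [real_inner_comm] at this
  exact this

lemma convex_feasSet (g : T → Eucl n → EReal) (hgconv : ∀ t, ConvexE (g t)) :
    Convex ℝ (feasSet g) := by
  intro x hx y hy a b ha hb hab t
  refine le_trans (hgconv t x y a b ha hb hab) ?_
  have h1 : (a : EReal) * g t x ≤ 0 :=
    mul_nonpos_of_nonneg_of_nonpos (by exact_mod_cast ha) (hx t)
  have h2 : (b : EReal) * g t y ≤ 0 :=
    mul_nonpos_of_nonneg_of_nonpos (by exact_mod_cast hb) (hy t)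
  calc (a : EReal) * g t x + (b : EReal) * g t y ≤ 0 + 0 := add_le_add h1 h2
    _ = 0 := add_zero 0

end Aux

/-- If `x̂ ∈ S` satisfies `G(x̂) ≠ ∅`, then LFMCQ holds at `x̂` if and only
if both ACQ and CCCQ hold at `x̂`. -/
theorem stmt18
    (hn : 1 ≤ n) (hp : 1 ≤ p)
    (f : Fin p → Eucl n → ℝ) (g : T → Eucl n → EReal)
    (hf : ∀ i, ConvexOn ℝ Set.univ (f i))
    (hgconv : ∀ t, ConvexE (g t))
    (hgproper : ∀ t, ProperE (g t))
    (hglsc : ∀ t, LowerSemicontinuous (g t))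
    (xh : Eucl n) (hxS : xh ∈ feasSet g)
    (hG : (GSet g xh).Nonempty) :
    LFMCQ g xh ↔ (ACQ g xh ∧ CCCQ g xh) := by
  have hSconv : Convex ℝ (feasSet g) := convex_feasSet g hgconv
  have hCC : contingentCone (feasSet g) xh = closure (rayCone (feasSet g) xh) :=
    contingent_eq_closure_rayCone hSconv hxS
  set Kc : ConvexCone ℝ (Eucl n) := (rayConeCone hSconv xh).closure with hKc
  have hKcset : (Kc : Set (Eucl n)) = contingentCone (feasSet g) xh := by
    rw [hKc, ConvexCone.coe_closure, hCC]; rfl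
  have hKcne : (Kc : Set (Eucl n)).Nonempty := by
    refine ⟨0, ?_⟩
    rw [hKcset, hCC]
    exact subset_closure ⟨0, le_refl 0, xh, hxS, by simp⟩
  have hKccl : IsClosed (Kc : Set (Eucl n)) := by
    rw [hKc, ConvexCone.coe_closure]; exact isClosed_closure
  have hbiC : negPolar (negPolar (contingentCone (feasSet g) xh))
      = contingentCone (feasSet g) xh := by
    have := negPolar_negPolar Kc hKcne hKccl
    rw [hKcset] at this; exact this
  have hGN : GSet g xh ⊆ normalCone (feasSet g) xh := GSet_subset_normalCone g xh hxS
  have hKN : coneHull (GSet g xh) ⊆ normalCone (feasSet g) xh :=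
    coneHull_subset_negPolar hGN
  constructor
  · intro hLFM
    refine ⟨⟨hG, ?_⟩, ?_⟩
    · have h1 : negPolar (GSet g xh) = negPolar (coneHull (GSet g xh)) :=
        (negPolar_coneHull _).symm
      rw [h1]
      rw [LFMCQ] at hLFM
      rw [← hLFM]
      rw [normalCone, hbiC]
    · rw [CCCQ]
      rw [LFMCQ] at hLFM
      rw [← hLFM]
      exact isClosed_negPolar _
  · rintro ⟨⟨_, hACQ⟩, hCCC⟩
    rw [LFMCQ]
    apply le_antisymm
    · have h1 : normalCone (feasSet g) xh ⊆ negPolar (negPolar (GSet g xh)) :=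
        negPolar_anti hACQ
      have h2 : negPolar (negPolar (GSet g xh))
          = negPolar (negPolar (coneHull (GSet g xh))) := by
        rw [negPolar_coneHull]
      have h3 : negPolar (negPolar (coneHull (GSet g xh))) = coneHull (GSet g xh) := by
        have := negPolar_negPolar (coneHullCone (GSet g xh)) ⟨0, zero_mem_coneHull _⟩ hCCC
        exact this
      rw [h2, h3] at h1
      exact h1
    · exact hKN

end MOSIP
end
end
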